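/- The game i-MARK({1,3},{2,3}) has no convergence: for every k ≥ 1 there exists a guess seed σ for starting position n = 12k whose guess sequence satisfies 𝒢_σ(m) ≠ 𝒢(m) for infinitely many m ≥ n. Consequently, for every k ≥ 1 and every c ≥ 3, convergence does not occur in c steps at starting position 12k; that is, there exist guess seeds σ, σ' for 12k and a position m with 12k+c ≤ m < 12k+c+3 such that 𝒢_σ(m) ≠ 𝒢_{σ'}(m). -/
import Mathlib


/-- The minimum excludant of a set of naturals. -/
noncomputable def mex (T : Set ℕ) : ℕ := sInf {k : ℕ | k ∉ T}

/-- The set of followers of position `n` in the game i-MARK(S,D):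
`n - s` for `s ∈ S` with `0 < s ≤ n`, and `n / d` for `d ∈ D` with `2 ≤ d`, `0 < n`, `d ∣ n`. -/
def followers (S D : Finset ℕ) (n : ℕ) : Finset ℕ :=
  ((S.filter fun s => 0 < s ∧ s ≤ n).image fun s => n - s) ∪
  ((D.filter fun d => 2 ≤ d ∧ 0 < n ∧ d ∣ n).image fun d => n / d)

theorem followers_lt {S D : Finset ℕ} {n m : ℕ} (h : m ∈ followers S D n) : m < n := by
  simp only [followers, Finset.mem_union, Finset.mem_image, Finset.mem_filter] at h
  rcases h with ⟨s, ⟨-, hs, hsn⟩, rfl⟩ | ⟨d, ⟨-, hd, hn, -⟩, rfl⟩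
  · omega
  · exact Nat.div_lt_self hn (by omega)

/-- The Sprague–Grundy function of i-MARK(S,D). -/
noncomputable def grundy (S D : Finset ℕ) : ℕ → ℕ
  | n => mex ↑((followers S D n).attach.image fun m => grundy S D m.1)
decreasing_by exact followers_lt m.2

/-- The number of followers of position `n` in i-MARK(S,D) (for positive `S` and `D` with
elements `≥ 2`): `φ(0) = 0` and `φ(n) = #{s ∈ S : s ≤ n} + #{d ∈ D : d ∣ n}` for `n > 0`. -/
def numFollowers (S D : Finset ℕ) (n : ℕ) : ℕ :=
  if n = 0 then 0 else (S.filter fun s => s ≤ n).card + (D.filter fun d => d ∣ n).card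

/-- `σ : ℕ → ℕ` is a guess seed for starting position `n` in i-MARK(S,D) if
`σ i ≤ φ(i)` for all `n ≤ i < n + max S` (values of `σ` outside this window are irrelevant). -/
def IsGuessSeed (S D : Finset ℕ) (n : ℕ) (σ : ℕ → ℕ) : Prop :=
  ∀ i, n ≤ i → i < n + S.sup id → σ i ≤ numFollowers S D i

/-- The guess sequence generated by seed `σ` from starting position `n`: it equals `σ` on
`[n, n + max S)`, and from `n + max S` on it is computed by the mex rule, using guessed values
for subtraction followers and true Grundy values for division followers. -/
noncomputable def guessSeq (S D : Finset ℕ) (n : ℕ) (σ : ℕ → ℕ) : ℕ → ℕ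
  | m =>
    if m < n + S.sup id then σ m
    else
      mex ((↑((S.filter fun t => 0 < t ∧ t ≤ m).attach.image
              fun t => guessSeq S D n σ (m - t.1)) : Set ℕ) ∪
        {g | ∃ d ∈ D, 2 ≤ d ∧ 0 < m ∧ d ∣ m ∧ g = grundy S D (m / d)})
decreasing_by
  have ht := t.2
  simp only [Finset.mem_filter] at ht
  omega

/-- Convergence occurs in `c` steps at starting position `n`: any two guess sequences from `n`
agree on all positions `m` with `n + c ≤ m < n + c + max S`. -/
def ConvergesIn (S D : Finset ℕ) (n c : ℕ) : Prop :=
  ∀ σ σ' : ℕ → ℕ, IsGuessSeed S D n σ → IsGuessSeed S D n σ' →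
    ∀ m, n + c ≤ m → m < n + c + S.sup id → guessSeq S D n σ m = guessSeq S D n σ' m

lemma attach_image (s : Finset ℕ) (f : ℕ → ℕ) :
    (s.attach.image fun t => f t.1) = s.image f := by
  ext b
  simp [Finset.mem_image, Subtype.exists]

lemma grundy_eq (S D : Finset ℕ) (n : ℕ) :
    grundy S D n = mex ↑((followers S D n).image (grundy S D)) := by
  rw [grundy, attach_image]

lemma mem_followers_iff (n m : ℕ) :
    m ∈ followers {1,3} {2,3} n ↔
      ((1 ≤ n ∧ m = n-1) ∨ (3 ≤ n ∧ m = n-3) ∨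
       (0 < n ∧ 2 ∣ n ∧ m = n/2) ∨ (0 < n ∧ 3 ∣ n ∧ m = n/3)) := by
  simp only [followers, Finset.mem_union, Finset.mem_image, Finset.mem_filter,
    Finset.mem_insert, Finset.mem_singleton]
  constructor
  · rintro (⟨s, ⟨hs, _, hsn⟩, rfl⟩ | ⟨d, ⟨hd, _, hn, hdvd⟩, rfl⟩)
    · rcases hs with rfl | rfl
      · exact Or.inl ⟨hsn, rfl⟩
      · exact Or.inr (Or.inl ⟨hsn, rfl⟩)
    · rcases hd with rfl | rfl
      · exact Or.inr (Or.inr (Or.inl ⟨hn, hdvd, rfl⟩))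
      · exact Or.inr (Or.inr (Or.inr ⟨hn, hdvd, rfl⟩))
  · rintro (⟨h, rfl⟩ | ⟨h, rfl⟩ | ⟨h, hd, rfl⟩ | ⟨h, hd, rfl⟩)
    · exact Or.inl ⟨1, ⟨Or.inl rfl, by omega, h⟩, rfl⟩
    · exact Or.inl ⟨3, ⟨Or.inr rfl, by omega, h⟩, rfl⟩
    · exact Or.inr ⟨2, ⟨Or.inl rfl, by omega, h, hd⟩, rfl⟩
    · exact Or.inr ⟨3, ⟨Or.inr rfl, by omega, h, hd⟩, rfl⟩

lemma grundy_val (n : ℕ) :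
    grundy {1,3} {2,3} n = mex {g | (1 ≤ n ∧ g = grundy {1,3} {2,3} (n-1)) ∨
      (3 ≤ n ∧ g = grundy {1,3} {2,3} (n-3)) ∨
      (0 < n ∧ 2 ∣ n ∧ g = grundy {1,3} {2,3} (n/2)) ∨
      (0 < n ∧ 3 ∣ n ∧ g = grundy {1,3} {2,3} (n/3))} := by
  rw [grundy_eq]
  congr 1
  ext g
  simp only [Finset.coe_image, Set.mem_image, Finset.mem_coe, mem_followers_iff,
    Set.mem_setOf_eq]
  constructor
  · rintro ⟨m, (⟨h, rfl⟩|⟨h, rfl⟩|⟨h,hd,rfl⟩|⟨h,hd,rfl⟩), rfl⟩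
    · exact Or.inl ⟨h, rfl⟩
    · exact Or.inr (Or.inl ⟨h, rfl⟩)
    · exact Or.inr (Or.inr (Or.inl ⟨h, hd, rfl⟩))
    · exact Or.inr (Or.inr (Or.inr ⟨h, hd, rfl⟩))
  · rintro (⟨h, rfl⟩|⟨h, rfl⟩|⟨h,hd,rfl⟩|⟨h,hd,rfl⟩)
    · exact ⟨_, Or.inl ⟨h, rfl⟩, rfl⟩
    · exact ⟨_, Or.inr (Or.inl ⟨h, rfl⟩), rfl⟩
    · exact ⟨_, Or.inr (Or.inr (Or.inl ⟨h, hd, rfl⟩)), rfl⟩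
    · exact ⟨_, Or.inr (Or.inr (Or.inr ⟨h, hd, rfl⟩)), rfl⟩

lemma mex_eq_zero {T : Set ℕ} (h : 0 ∉ T) : mex T = 0 :=
  Nat.le_antisymm (Nat.sInf_le h) (Nat.zero_le _)

lemma mex_ne_zero {T : Set ℕ} (hf : T.Finite) (h : 0 ∈ T) : mex T ≠ 0 := by
  intro h0
  have hne : {k : ℕ | k ∉ T}.Nonempty := by
    have := hf.infinite_compl
    exact this.nonempty
  have := Nat.sInf_mem hne
  rw [show sInf {k : ℕ | k ∉ T} = 0 from h0] at this
  exact this h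

lemma mex_le {T : Set ℕ} {k : ℕ} (h : k ∉ T) : mex T ≤ k := Nat.sInf_le h

lemma mex_eq_one {T : Set ℕ} (hf : T.Finite) (h0 : 0 ∈ T) (h1 : 1 ∉ T) : mex T = 1 :=
  Nat.le_antisymm (mex_le h1) (Nat.one_le_iff_ne_zero.2 (mex_ne_zero hf h0))

lemma val_set_finite (n : ℕ) : {g | (1 ≤ n ∧ g = grundy {1,3} {2,3} (n-1)) ∨
      (3 ≤ n ∧ g = grundy {1,3} {2,3} (n-3)) ∨
      (0 < n ∧ 2 ∣ n ∧ g = grundy {1,3} {2,3} (n/2)) ∨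
      (0 < n ∧ 3 ∣ n ∧ g = grundy {1,3} {2,3} (n/3))}.Finite := by
  apply Set.Finite.subset (Set.toFinite {grundy {1,3} {2,3} (n-1), grundy {1,3} {2,3} (n-3),
    grundy {1,3} {2,3} (n/2), grundy {1,3} {2,3} (n/3)})
  rintro g (⟨_,rfl⟩|⟨_,rfl⟩|⟨_,_,rfl⟩|⟨_,_,rfl⟩) <;> simp

lemma G0 : grundy {1,3} {2,3} 0 = 0 := by
  rw [grundy_val]
  apply mex_eq_zero
  rintro (⟨h,_⟩|⟨h,_⟩|⟨h,_,_⟩|⟨h,_,_⟩) <;> omega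

lemma G1 : grundy {1,3} {2,3} 1 = 1 := by
  rw [grundy_val]
  apply mex_eq_one (val_set_finite 1)
  · exact Or.inl ⟨le_refl 1, by rw [show (1:ℕ)-1 = 0 from rfl, G0]⟩
  · rintro (⟨h,hg⟩|⟨h,_⟩|⟨h,hd,hg⟩|⟨h,hd,_⟩)
    · rw [show (1:ℕ)-1 = 0 from rfl, G0] at hg; omega
    · omega
    · omega
    · omega

lemma G2 : grundy {1,3} {2,3} 2 = 0 := by
  rw [grundy_val]
  apply mex_eq_zero
  rintro (⟨h,hg⟩|⟨h,_⟩|⟨h,hd,hg⟩|⟨h,hd,_⟩)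
  · rw [show (2:ℕ)-1 = 1 from rfl, G1] at hg; omega
  · omega
  · rw [show (2:ℕ)/2 = 1 from rfl, G1] at hg; omega
  · omega

lemma grundy_AB : ∀ n : ℕ, (n % 2 = 1 → n % 3 ≠ 0 → 7 ≤ n → grundy {1,3} {2,3} n = 0) ∧
    (n % 2 = 0 → 4 ≤ n → grundy {1,3} {2,3} n ≠ 0) := by
  intro n
  induction n using Nat.strong_induction_on with
  | _ n ih =>
  constructor
  · intro h2 h3 h7
    rw [grundy_val]
    apply mex_eq_zero
    rintro (⟨h,hg⟩|⟨h,hg⟩|⟨h,hd,hg⟩|⟨h,hd,hg⟩)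
    · exact (ih (n-1) (by omega)).2 (by omega) (by omega) hg.symm
    · exact (ih (n-3) (by omega)).2 (by omega) (by omega) hg.symm
    · omega
    · omega
  · intro h2 h4
    rw [grundy_val]
    apply mex_ne_zero (val_set_finite n)
    simp only [Set.mem_setOf_eq]
    by_cases hsm : n = 4 ∨ n = 6
    · rcases hsm with rfl | rfl
      · exact Or.inr (Or.inr (Or.inl ⟨by omega, by omega,
          by rw [show (4:ℕ)/2 = 2 from rfl, G2]⟩))
      · exact Or.inr (Or.inr (Or.inr ⟨by omega, by omega,
          by rw [show (6:ℕ)/3 = 2 from rfl, G2]⟩))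
    · by_cases h31 : n % 3 = 1
      · exact Or.inr (Or.inl ⟨by omega,
          ((ih (n-3) (by omega)).1 (by omega) (by omega) (by omega)).symm⟩)
      · exact Or.inl ⟨by omega,
          ((ih (n-1) (by omega)).1 (by omega) (by omega) (by omega)).symm⟩

lemma sup13 : ({1,3} : Finset ℕ).sup id = 3 := rfl

lemma guessSeq_lt {n m : ℕ} (σ : ℕ → ℕ) (h : m < n + 3) :
    guessSeq {1,3} {2,3} n σ m = σ m := by
  rw [guessSeq, if_pos (show m < n + ({1,3} : Finset ℕ).sup id by rw [sup13]; exact h)]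

lemma guessSeq_ge {n m : ℕ} (σ : ℕ → ℕ) (h : n + 3 ≤ m) :
    guessSeq {1,3} {2,3} n σ m = mex {g | g = guessSeq {1,3} {2,3} n σ (m-1) ∨
      g = guessSeq {1,3} {2,3} n σ (m-3) ∨
      (2 ∣ m ∧ g = grundy {1,3} {2,3} (m/2)) ∨
      (3 ∣ m ∧ g = grundy {1,3} {2,3} (m/3))} := by
  rw [guessSeq, if_neg (show ¬ m < n + ({1,3} : Finset ℕ).sup id by rw [sup13]; omega)]
  rw [attach_image (Finset.filter (fun t => 0 < t ∧ t ≤ m) ({1,3} : Finset ℕ))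
    (fun x => guessSeq {1,3} {2,3} n σ (m - x))]
  congr 1
  ext g
  simp only [Set.mem_union, Finset.coe_image, Set.mem_image, Finset.mem_coe,
    Finset.mem_filter, Finset.mem_insert, Finset.mem_singleton, Set.mem_setOf_eq]
  constructor
  · rintro (⟨t, ⟨ht, _, _⟩, rfl⟩ | ⟨d, hd, _, _, hdvd, rfl⟩)
    · rcases ht with rfl | rfl
      · exact Or.inl rfl
      · exact Or.inr (Or.inl rfl)
    · rcases hd with rfl | rfl
      · exact Or.inr (Or.inr (Or.inl ⟨hdvd, rfl⟩))
      · exact Or.inr (Or.inr (Or.inr ⟨hdvd, rfl⟩))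
  · rintro (rfl | rfl | ⟨hd, rfl⟩ | ⟨hd, rfl⟩)
    · exact Or.inl ⟨1, ⟨Or.inl rfl, by omega, by omega⟩, rfl⟩
    · exact Or.inl ⟨3, ⟨Or.inr rfl, by omega, by omega⟩, rfl⟩
    · exact Or.inr ⟨2, Or.inl rfl, by omega, by omega, hd, rfl⟩
    · exact Or.inr ⟨3, Or.inr rfl, by omega, by omega, hd, rfl⟩

lemma guess_set_finite (n m : ℕ) (σ : ℕ → ℕ) : {g | g = guessSeq {1,3} {2,3} n σ (m-1) ∨
      g = guessSeq {1,3} {2,3} n σ (m-3) ∨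
      (2 ∣ m ∧ g = grundy {1,3} {2,3} (m/2)) ∨
      (3 ∣ m ∧ g = grundy {1,3} {2,3} (m/3))}.Finite := by
  apply Set.Finite.subset (Set.toFinite {guessSeq {1,3} {2,3} n σ (m-1),
    guessSeq {1,3} {2,3} n σ (m-3), grundy {1,3} {2,3} (m/2), grundy {1,3} {2,3} (m/3)})
  rintro g (rfl|rfl|⟨_,rfl⟩|⟨_,rfl⟩) <;> simp

lemma badInv (n : ℕ) (hn : n % 12 = 0) (h12 : 12 ≤ n) (σ : ℕ → ℕ)
    (h0 : σ n = 0) (h1 : σ (n+1) = 1) :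
    ∀ m, n ≤ m → (m % 4 = 0 → guessSeq {1,3} {2,3} n σ m = 0) ∧
      (m % 2 = 1 → guessSeq {1,3} {2,3} n σ m ≠ 0) := by
  intro m
  induction m using Nat.strong_induction_on with
  | _ m ih =>
  intro hm
  by_cases hlt : m < n + 3
  · rw [guessSeq_lt σ hlt]
    constructor
    · intro h4
      have : m = n := by omega
      rw [this, h0]
    · intro h2
      have : m = n + 1 := by omega
      rw [this, h1]; omega
  · push_neg at hlt
    rw [guessSeq_ge σ hlt]
    constructor
    · intro h4
      apply mex_eq_zero
      rintro (hg | hg | ⟨hd, hg⟩ | ⟨hd, hg⟩)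
      · exact (ih (m-1) (by omega) (by omega)).2 (by omega) hg.symm
      · exact (ih (m-3) (by omega) (by omega)).2 (by omega) hg.symm
      · exact (grundy_AB (m/2)).2 (by omega) (by omega) hg.symm
      · exact (grundy_AB (m/3)).2 (by omega) (by omega) hg.symm
    · intro h2
      apply mex_ne_zero (guess_set_finite n m σ)
      simp only [Set.mem_setOf_eq]
      by_cases h4 : (m-1) % 4 = 0
      · exact Or.inl ((ih (m-1) (by omega) (by omega)).1 h4).symm
      · exact Or.inr (Or.inl ((ih (m-3) (by omega) (by omega)).1 (by omega)).symm)

lemma trueSeq (n : ℕ) (hn : 3 ≤ n) (σ : ℕ → ℕ)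
    (hσ : ∀ i, n ≤ i → i < n + 3 → σ i = grundy {1,3} {2,3} i) :
    ∀ m, n ≤ m → guessSeq {1,3} {2,3} n σ m = grundy {1,3} {2,3} m := by
  intro m
  induction m using Nat.strong_induction_on with
  | _ m ih =>
  intro hm
  by_cases hlt : m < n + 3
  · rw [guessSeq_lt σ hlt, hσ m hm hlt]
  · push_neg at hlt
    rw [guessSeq_ge σ hlt, grundy_val m]
    congr 1
    ext g
    simp only [Set.mem_setOf_eq]
    rw [ih (m-1) (by omega) (by omega), ih (m-3) (by omega) (by omega)]
    constructor
    · rintro (rfl | rfl | ⟨hd, rfl⟩ | ⟨hd, rfl⟩)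
      · exact Or.inl ⟨by omega, rfl⟩
      · exact Or.inr (Or.inl ⟨by omega, rfl⟩)
      · exact Or.inr (Or.inr (Or.inl ⟨by omega, hd, rfl⟩))
      · exact Or.inr (Or.inr (Or.inr ⟨by omega, hd, rfl⟩))
    · rintro (⟨_, rfl⟩ | ⟨_, rfl⟩ | ⟨_, hd, rfl⟩ | ⟨_, hd, rfl⟩)
      · exact Or.inl rfl
      · exact Or.inr (Or.inl rfl)
      · exact Or.inr (Or.inr (Or.inl ⟨hd, rfl⟩))
      · exact Or.inr (Or.inr (Or.inr ⟨hd, rfl⟩))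

lemma mex_coe_le_card (T : Finset ℕ) : mex ↑T ≤ T.card := by
  obtain ⟨k, hk, hknot⟩ : ∃ k ∈ Finset.range (T.card + 1), k ∉ T := by
    by_contra h
    push_neg at h
    have := Finset.card_le_card (fun x hx => h x hx)
    simp [Finset.card_range] at this
  refine le_trans (mex_le (show (k:ℕ) ∉ (↑T : Set ℕ) by simpa using hknot)) ?_
  simp only [Finset.mem_range] at hk; omega

lemma grundy_le_numFollowers (i : ℕ) :
    grundy {1,3} {2,3} i ≤ numFollowers {1,3} {2,3} i := by
  rcases Nat.eq_zero_or_pos i with rfl | hi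
  · rw [G0]; exact Nat.zero_le _
  · rw [grundy_eq]
    refine le_trans (mex_coe_le_card _) (le_trans (Finset.card_image_le) ?_)
    rw [numFollowers, if_neg (by omega)]
    refine le_trans (Finset.card_union_le _ _) (add_le_add
      (le_trans Finset.card_image_le (Finset.card_le_card ?_))
      (le_trans Finset.card_image_le (Finset.card_le_card ?_)))
    · intro x hx
      simp only [Finset.mem_filter] at *
      exact ⟨hx.1, hx.2.2⟩
    · intro x hx
      simp only [Finset.mem_filter] at *
      exact ⟨hx.1, hx.2.2.2⟩

lemma hit (a : ℕ) : ∃ m, a ≤ m ∧ m < a + 3 ∧ (m % 4 = 0 ∨ (m % 2 = 1 ∧ m % 3 ≠ 0)) := by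
  have h : a % 12 = 0 ∨ a % 12 = 1 ∨ a % 12 = 2 ∨ a % 12 = 3 ∨ a % 12 = 4 ∨ a % 12 = 5 ∨
      a % 12 = 6 ∨ a % 12 = 7 ∨ a % 12 = 8 ∨ a % 12 = 9 ∨ a % 12 = 10 ∨ a % 12 = 11 := by
    omega
  rcases h with h|h|h|h|h|h|h|h|h|h|h|h
  · exact ⟨a, le_refl a, by omega, by omega⟩
  · exact ⟨a, le_refl a, by omega, by omega⟩
  · exact ⟨a+2, by omega, by omega, by omega⟩
  · exact ⟨a+1, by omega, by omega, by omega⟩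
  · exact ⟨a, le_refl a, by omega, by omega⟩
  · exact ⟨a, le_refl a, by omega, by omega⟩
  · exact ⟨a+1, by omega, by omega, by omega⟩
  · exact ⟨a, le_refl a, by omega, by omega⟩
  · exact ⟨a, le_refl a, by omega, by omega⟩
  · exact ⟨a+2, by omega, by omega, by omega⟩
  · exact ⟨a+1, by omega, by omega, by omega⟩
  · exact ⟨a, le_refl a, by omega, by omega⟩



def badSeed (n : ℕ) : ℕ → ℕ := fun i => if i = n + 1 then 1 else 0

lemma badSeed_n (n : ℕ) : badSeed n n = 0 := by
  rw [badSeed]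
  exact if_neg (by omega)

lemma badSeed_n1 (n : ℕ) : badSeed n (n + 1) = 1 := by
  rw [badSeed]
  exact if_pos rfl

lemma badSeed_le (n i : ℕ) : badSeed n i ≤ 1 := by
  rw [badSeed]
  split <;> omega

/-- The game i-MARK({1,3},{2,3}) has no convergence: for every `k ≥ 1` there is a guess seed
for starting position `12k` whose guess sequence disagrees with the true Grundy sequence at
infinitely many positions `m ≥ 12k`; consequently, for every `k ≥ 1` and every `c ≥ 3`,
convergence does not occur in `c` steps at starting position `12k`. -/
theorem imark_13_23_no_convergence :
    (∀ k : ℕ, 1 ≤ k → ∃ σ : ℕ → ℕ, IsGuessSeed {1, 3} {2, 3} (12 * k) σ ∧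
      ∀ N : ℕ, ∃ m : ℕ, N ≤ m ∧ 12 * k ≤ m ∧
        guessSeq {1, 3} {2, 3} (12 * k) σ m ≠ grundy {1, 3} {2, 3} m) ∧
    (∀ k : ℕ, 1 ≤ k → ∀ c : ℕ, 3 ≤ c →
      ∃ σ σ' : ℕ → ℕ, IsGuessSeed {1, 3} {2, 3} (12 * k) σ ∧
        IsGuessSeed {1, 3} {2, 3} (12 * k) σ' ∧
        ∃ m : ℕ, 12 * k + c ≤ m ∧ m < 12 * k + c + 3 ∧
          guessSeq {1, 3} {2, 3} (12 * k) σ m ≠ guessSeq {1, 3} {2, 3} (12 * k) σ' m) := by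
  have hGseed : ∀ k : ℕ, 1 ≤ k → IsGuessSeed {1,3} {2,3} (12*k) (grundy {1,3} {2,3}) :=
    fun k _ i _ _ => grundy_le_numFollowers i
  have hσseed : ∀ k : ℕ, 1 ≤ k → IsGuessSeed {1,3} {2,3} (12*k) (badSeed (12*k)) := by
    intro k hk i hi hi'
    rw [sup13] at hi'
    by_cases h : i = 12*k+1
    · subst h
      rw [badSeed_n1, numFollowers]
      rw [if_neg (show ¬(12*k+1 = 0) by omega)]
      have : 0 < (({1,3} : Finset ℕ).filter fun s => s ≤ 12*k+1).card :=
        Finset.card_pos.2 ⟨1, by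
          simp only [Finset.mem_filter, Finset.mem_insert, Finset.mem_singleton]
          exact ⟨Or.inl trivial, by omega⟩⟩
      omega
    · rw [badSeed, if_neg h]
      exact Nat.zero_le _
  have key : ∀ k, 1 ≤ k → ∀ m, 12*k ≤ m → (m % 4 = 0 ∨ (m % 2 = 1 ∧ m % 3 ≠ 0)) →
      guessSeq {1,3} {2,3} (12*k) (badSeed (12*k)) m ≠ grundy {1,3} {2,3} m := by
    intro k hk m hm hcase
    have hb := badInv (12*k) (by omega) (by omega) (badSeed (12*k))
      (badSeed_n _) (badSeed_n1 _) m hm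
    rcases hcase with h4 | ⟨h2, h3⟩
    · rw [hb.1 h4]
      exact fun hc => (grundy_AB m).2 (by omega) (by omega) hc.symm
    · rw [(grundy_AB m).1 h2 h3 (by omega)]
      exact hb.2 h2
  constructor
  · intro k hk
    refine ⟨badSeed (12*k), hσseed k hk, ?_⟩
    intro N
    exact ⟨12*k + 4*N, by omega, by omega, key k hk _ (by omega) (Or.inl (by omega))⟩
  · intro k hk c hc
    obtain ⟨m, hm1, hm2, hcase⟩ := hit (12*k + c)
    refine ⟨badSeed (12*k), grundy {1,3} {2,3}, hσseed k hk,
      hGseed k hk, m, hm1, by omega, ?_⟩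
    rw [trueSeq (12*k) (by omega) _ (fun i _ _ => rfl) m (by omega)]
    exact key k hk m (by omega) hcase
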